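/- (Triangle inequality for the Jensen–Shannon distance) For any probability measures P, Q, R on a measurable space, √JSD(P, R) ≤ √JSD(P, Q) + √JSD(Q, R); that is, the square root of the Jensen–Shannon divergence satisfies the triangle inequality. -/

import Mathlib

open MeasureTheory
open scoped ENNReal

open Classical in
/-- Kullback–Leibler divergence, valued in the extended reals:
`KL(P‖Q) = ∫ log (dP/dQ) dP` if `P ≪ Q` and the log-likelihood ratio is
`P`-integrable, and `∞` otherwise. -/
noncomputable def klDiv {Ω : Type*} [MeasurableSpace Ω] (P Q : Measure Ω) : EReal :=
  if P ≪ Q ∧ Integrable (llr P Q) P then ((∫ x, llr P Q x ∂P : ℝ) : EReal) else ⊤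

/-- Jensen–Shannon divergence:
`JSD(P,Q) = (1/2) KL(P‖M) + (1/2) KL(Q‖M)` with `M = (1/2)(P + Q)`. -/
noncomputable def jsDiv {Ω : Type*} [MeasurableSpace Ω] (P Q : Measure Ω) : EReal :=
  (1 / 2 : EReal) * klDiv P ((2 : ℝ≥0∞)⁻¹ • (P + Q))
    + (1 / 2 : EReal) * klDiv Q ((2 : ℝ≥0∞)⁻¹ • (P + Q))

open Real Filter Set Topology
set_option maxHeartbeats 2000000

lemma sqrt_sum_sq {x y : ℝ} (hx : 0 ≤ x) (hy : 0 ≤ y) :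
    Real.sqrt (x + y + 2 * Real.sqrt (x * y)) = Real.sqrt x + Real.sqrt y := by
  rw [show x + y + 2 * Real.sqrt (x*y) = (Real.sqrt x + Real.sqrt y)^2 by
    rw [Real.sqrt_mul hx y]; ring_nf
    rw [Real.sq_sqrt hx, Real.sq_sqrt hy]; ring]
  exact Real.sqrt_sq (by positivity)

/-- Minkowski-type lemma: if `√u ≤ √v + √w` pointwise a.e., then the same holds
for the integrals. -/
lemma sqrt_integral_triangle {α : Type*} [MeasurableSpace α] {μ : Measure α} {u v w : α → ℝ}
    (hu : Integrable u μ) (hv : Integrable v μ) (hw : Integrable w μ)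
    (hv0 : 0 ≤ᵐ[μ] v) (hw0 : 0 ≤ᵐ[μ] w)
    (htri : ∀ᵐ x ∂μ, Real.sqrt (u x) ≤ Real.sqrt (v x) + Real.sqrt (w x)) :
    Real.sqrt (∫ x, u x ∂μ) ≤ Real.sqrt (∫ x, v x ∂μ) + Real.sqrt (∫ x, w x ∂μ) := by
  set Iv := ∫ x, v x ∂μ with hIv
  set Iw := ∫ x, w x ∂μ with hIw
  have hIv0 : 0 ≤ Iv := integral_nonneg_of_ae hv0
  have hIw0 : 0 ≤ Iw := integral_nonneg_of_ae hw0
  have hmv : AEStronglyMeasurable (fun x => Real.sqrt (v x)) μ :=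
    Real.continuous_sqrt.comp_aestronglyMeasurable hv.1
  have hmw : AEStronglyMeasurable (fun x => Real.sqrt (w x)) μ :=
    Real.continuous_sqrt.comp_aestronglyMeasurable hw.1
  have hg : Integrable (fun x => Real.sqrt (v x) * Real.sqrt (w x)) μ := by
    refine Integrable.mono' ((hv.add hw).div_const 2) (hmv.mul hmw) ?_
    filter_upwards [hv0, hw0] with x hvx hwx
    simp only [Pi.zero_apply] at hvx hwx
    have h1 : Real.sqrt (v x) * Real.sqrt (w x) ≤ (v x + w x) / 2 := by
      nlinarith [sq_nonneg (Real.sqrt (v x) - Real.sqrt (w x)), Real.sq_sqrt hvx,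
        Real.sq_sqrt hwx, Real.sqrt_nonneg (v x), Real.sqrt_nonneg (w x)]
    rw [Real.norm_eq_abs, abs_of_nonneg (by positivity)]
    simpa using h1
  -- Cauchy–Schwarz, elementary
  have hCS : ∫ x, Real.sqrt (v x) * Real.sqrt (w x) ∂μ ≤ Real.sqrt Iv * Real.sqrt Iw := by
    rcases eq_or_lt_of_le hIv0 with hv' | hv'
    · have h0 : v =ᵐ[μ] 0 := (integral_eq_zero_iff_of_nonneg_ae hv0 hv).mp hv'.symm
      have hz : (fun x => Real.sqrt (v x) * Real.sqrt (w x)) =ᵐ[μ] 0 := by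
        filter_upwards [h0] with x hx
        simp only [Pi.zero_apply] at hx ⊢; simp [hx]
      have : ∫ x, Real.sqrt (v x) * Real.sqrt (w x) ∂μ = 0 := by
        rw [integral_congr_ae hz]; simp
      rw [this]; positivity
    rcases eq_or_lt_of_le hIw0 with hw' | hw'
    · have h0 : w =ᵐ[μ] 0 := (integral_eq_zero_iff_of_nonneg_ae hw0 hw).mp hw'.symm
      have hz : (fun x => Real.sqrt (v x) * Real.sqrt (w x)) =ᵐ[μ] 0 := by
        filter_upwards [h0] with x hx
        simp only [Pi.zero_apply] at hx ⊢; simp [hx]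
      have : ∫ x, Real.sqrt (v x) * Real.sqrt (w x) ∂μ = 0 := by
        rw [integral_congr_ae hz]; simp
      rw [this]; positivity
    · set t := Real.sqrt Iw / Real.sqrt Iv with ht
      have hsvp : 0 < Real.sqrt Iv := Real.sqrt_pos.mpr hv'
      have hswp : 0 < Real.sqrt Iw := Real.sqrt_pos.mpr hw'
      have hsv : Real.sqrt Iv ^ 2 = Iv := Real.sq_sqrt hIv0
      have hsw : Real.sqrt Iw ^ 2 = Iw := Real.sq_sqrt hIw0
      have htpos : 0 < t := by positivity
      have hpw : ∀ᵐ x ∂μ, Real.sqrt (v x) * Real.sqrt (w x) ≤ (t * v x + w x / t) / 2 := by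
        filter_upwards [hv0, hw0] with x hvx hwx
        simp only [Pi.zero_apply] at hvx hwx
        have e1 : Real.sqrt (t * v x) = Real.sqrt t * Real.sqrt (v x) := Real.sqrt_mul htpos.le _
        have e2 : Real.sqrt (w x / t) = Real.sqrt (w x) / Real.sqrt t := Real.sqrt_div hwx t
        have e3 : Real.sqrt t ^ 2 = t := Real.sq_sqrt htpos.le
        have htp : 0 < Real.sqrt t := Real.sqrt_pos.mpr htpos
        have e4 : Real.sqrt (t * v x) * Real.sqrt (w x / t)
            = Real.sqrt (v x) * Real.sqrt (w x) := by
          rw [e1, e2]; field_simp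
        nlinarith [sq_nonneg (Real.sqrt (t * v x) - Real.sqrt (w x / t)),
          Real.sq_sqrt (mul_nonneg htpos.le hvx), Real.sq_sqrt (div_nonneg hwx htpos.le), e4]
      have hIntR : Integrable (fun x => (t * v x + w x / t) / 2) μ :=
        ((hv.const_mul t).add (hw.div_const t)).div_const 2
      have hmono := integral_mono_ae hg hIntR hpw
      calc ∫ x, Real.sqrt (v x) * Real.sqrt (w x) ∂μ
          ≤ ∫ x, (t * v x + w x / t) / 2 ∂μ := hmono
        _ = (t * Iv + Iw / t) / 2 := by
            rw [integral_div, integral_add (hv.const_mul t) (hw.div_const t),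
              integral_const_mul, integral_div]
        _ = Real.sqrt Iv * Real.sqrt Iw := by
            rw [ht]; field_simp; nlinarith [hsv, hsw, hsvp, hswp]
  -- main chain
  have hpt : ∀ᵐ x ∂μ, u x ≤ v x + w x + 2 * (Real.sqrt (v x) * Real.sqrt (w x)) := by
    filter_upwards [htri, hv0, hw0] with x hx hvx hwx
    simp only [Pi.zero_apply] at hvx hwx
    rcases le_or_gt (u x) 0 with h | h
    · nlinarith [Real.sqrt_nonneg (v x), Real.sqrt_nonneg (w x),
        mul_nonneg (Real.sqrt_nonneg (v x)) (Real.sqrt_nonneg (w x))]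
    · have hre : u x = (Real.sqrt (u x))^2 := (Real.sq_sqrt h.le).symm
      rw [hre]
      nlinarith [Real.sqrt_nonneg (u x), Real.sqrt_nonneg (v x), Real.sqrt_nonneg (w x),
        Real.sq_sqrt hvx, Real.sq_sqrt hwx]
  have hIntS : Integrable (fun x => v x + w x + 2 * (Real.sqrt (v x) * Real.sqrt (w x))) μ :=
    (hv.add hw).add (hg.const_mul 2)
  have hint : ∫ x, u x ∂μ ≤ Iv + Iw + 2 * ∫ x, Real.sqrt (v x) * Real.sqrt (w x) ∂μ := by
    have h2 := integral_mono_ae hu hIntS hpt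
    have hIg2 : Integrable (fun x => v x + w x) μ := hv.add hw
    calc ∫ x, u x ∂μ
        ≤ ∫ x, (v x + w x + 2 * (Real.sqrt (v x) * Real.sqrt (w x))) ∂μ := h2
      _ = Iv + Iw + 2 * ∫ x, Real.sqrt (v x) * Real.sqrt (w x) ∂μ := by
          rw [integral_add hIg2 (hg.const_mul 2), integral_add hv hw, integral_const_mul]
  have hfin : ∫ x, u x ∂μ ≤ Iv + Iw + 2 * Real.sqrt (Iv * Iw) := by
    rw [Real.sqrt_mul hIv0]
    linarith
  calc Real.sqrt (∫ x, u x ∂μ) ≤ Real.sqrt (Iv + Iw + 2 * Real.sqrt (Iv * Iw)) :=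
        Real.sqrt_le_sqrt hfin
    _ = Real.sqrt Iv + Real.sqrt Iw := sqrt_sum_sq hIv0 hIw0


lemma sqrt_sum_sq' {x y : ℝ} (hx : 0 ≤ x) (hy : 0 ≤ y) :
    Real.sqrt (x + y + 2 * Real.sqrt (x * y)) = Real.sqrt x + Real.sqrt y := by
  rw [show x + y + 2 * Real.sqrt (x*y) = (Real.sqrt x + Real.sqrt y)^2 by
    rw [Real.sqrt_mul hx y]; ring_nf
    rw [Real.sq_sqrt hx, Real.sq_sqrt hy]; ring]
  exact Real.sqrt_sq (by positivity)

/-- The kernel of the Jensen-Shannon integrand in its integral representation. -/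
noncomputable def Gk (s a b : ℝ) : ℝ := s * (b - a)^2 / (2 * (a + s) * (b + s) * (a + b + 2*s))

lemma Gk_comm (s a b : ℝ) : Gk s a b = Gk s b a := by
  unfold Gk
  rw [show (b-a)^2 = (a-b)^2 by ring, show 2*(a+s)*(b+s)*(a+b+2*s) = 2*(b+s)*(a+s)*(b+a+2*s) by ring]

lemma Gk_nonneg {s a b : ℝ} (hs : 0 < s) (ha : 0 ≤ a) (hb : 0 ≤ b) : 0 ≤ Gk s a b := by
  unfold Gk; positivity

/-- Middle case core : `a ≤ b ≤ c` written with `A = a+s`, `u = b-a`, `v = c-b`. -/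
lemma mid_core (s A u v : ℝ) (hs : 0 < s) (hA : 0 < A) (hu : 0 ≤ u) (hv : 0 ≤ v) :
    Real.sqrt (s*(u+v)^2/(2*A*(A+u+v)*(2*A+u+v)))
      ≤ Real.sqrt (s*u^2/(2*A*(A+u)*(2*A+u)))
        + Real.sqrt (s*v^2/(2*(A+u)*(A+u+v)*(2*A+2*u+v))) := by
  have hB : (0:ℝ) < A + u := by linarith
  have hC : (0:ℝ) < A + u + v := by linarith
  have hP : (0:ℝ) < 2*A + u := by linarith
  have hQ : (0:ℝ) < 2*A + 2*u + v := by linarith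
  have hR : (0:ℝ) < 2*A + u + v := by linarith
  have hGab : (0:ℝ) ≤ s*u^2/(2*A*(A+u)*(2*A+u)) := by positivity
  have hGbc : (0:ℝ) ≤ s*v^2/(2*(A+u)*(A+u+v)*(2*A+2*u+v)) := by positivity
  have hW : (0:ℝ) < A*(A+u+v)*(2*A+u)*(2*A+2*u+v) := by positivity
  set W := Real.sqrt (A*(A+u+v)*(2*A+u)*(2*A+2*u+v)) with hWdef
  have hWpos : 0 < W := Real.sqrt_pos.mpr hW
  have hW2 : W^2 = A*(A+u+v)*(2*A+u)*(2*A+2*u+v) := Real.sq_sqrt hW.le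
  have hprod : (s*u^2/(2*A*(A+u)*(2*A+u))) * (s*v^2/(2*(A+u)*(A+u+v)*(2*A+2*u+v)))
      = ((s*u*v/(2*(A+u)))/W)^2 := by
    rw [div_pow, div_pow, hW2]
    field_simp
  have hT : s*(u+v)^2/(2*A*(A+u+v)*(2*A+u+v)) - s*u^2/(2*A*(A+u)*(2*A+u))
      - s*v^2/(2*(A+u)*(A+u+v)*(2*A+2*u+v))
      = s*(8*A^3*u*v + 14*A^2*u^2*v + 10*A^2*u*v^2 + 6*A*u^3*v + 8*A*u^2*v^2 + 2*A*u*v^3)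
        / (2*(A*(A+u)*(A+u+v)*(2*A+u)*(2*A+2*u+v)*(2*A+u+v))) := by
    field_simp
    ring
  have hTnn : (0:ℝ) ≤ 8*A^3*u*v + 14*A^2*u^2*v + 10*A^2*u*v^2 + 6*A*u^3*v + 8*A*u^2*v^2 + 2*A*u*v^3 := by
    positivity
  have key : s*(8*A^3*u*v + 14*A^2*u^2*v + 10*A^2*u*v^2 + 6*A*u^3*v + 8*A*u^2*v^2 + 2*A*u*v^3)
        / (2*(A*(A+u)*(A+u+v)*(2*A+u)*(2*A+2*u+v)*(2*A+u+v)))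
      ≤ 2*((s*u*v/(2*(A+u)))/W) := by
    have lhsnn : (0:ℝ) ≤ s*(8*A^3*u*v + 14*A^2*u^2*v + 10*A^2*u*v^2 + 6*A*u^3*v + 8*A*u^2*v^2 + 2*A*u*v^3)
        / (2*(A*(A+u)*(A+u+v)*(2*A+u)*(2*A+2*u+v)*(2*A+u+v))) := by positivity
    have rhsnn : (0:ℝ) ≤ 2*((s*u*v/(2*(A+u)))/W) := by positivity
    have hsq : (s*(8*A^3*u*v + 14*A^2*u^2*v + 10*A^2*u*v^2 + 6*A*u^3*v + 8*A*u^2*v^2 + 2*A*u*v^3)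
        / (2*(A*(A+u)*(A+u+v)*(2*A+u)*(2*A+2*u+v)*(2*A+u+v))))^2
        ≤ (2*((s*u*v/(2*(A+u)))/W))^2 := by
      have hrw : (2*((s*u*v/(2*(A+u)))/W))^2 = (s*u*v)^2/((A+u)^2*(A*(A+u+v)*(2*A+u)*(2*A+2*u+v))) := by
        rw [mul_pow, div_pow, div_pow, hW2]
        field_simp
      rw [hrw, div_pow]
      rw [div_le_div_iff₀ (by positivity) (by positivity)]
      have cert : (8*A^3*u*v + 14*A^2*u^2*v + 10*A^2*u*v^2 + 6*A*u^3*v + 8*A*u^2*v^2 + 2*A*u*v^3)^2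
          + (4*A*u^3*v^6 + 20*A*u^4*v^5 + 36*A*u^5*v^4 + 28*A*u^6*v^3 + 8*A*u^7*v^2
            + 4*A^2*u^2*v^6 + 36*A^2*u^3*v^5 + 88*A^2*u^4*v^4 + 84*A^2*u^5*v^3 + 28*A^2*u^6*v^2
            + 16*A^3*u^2*v^5 + 64*A^3*u^3*v^4 + 80*A^3*u^4*v^3 + 32*A^3*u^5*v^2
            + 12*A^4*u^2*v^4 + 24*A^4*u^3*v^3 + 12*A^4*u^4*v^2)
          = 4*u^2*v^2*(A*(A+u+v)*(2*A+u)*(2*A+2*u+v)*(2*A+u+v)^2) := by ring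
      have hE : (0:ℝ) ≤ 4*A*u^3*v^6 + 20*A*u^4*v^5 + 36*A*u^5*v^4 + 28*A*u^6*v^3 + 8*A*u^7*v^2
            + 4*A^2*u^2*v^6 + 36*A^2*u^3*v^5 + 88*A^2*u^4*v^4 + 84*A^2*u^5*v^3 + 28*A^2*u^6*v^2
            + 16*A^3*u^2*v^5 + 64*A^3*u^3*v^4 + 80*A^3*u^4*v^3 + 32*A^3*u^5*v^2
            + 12*A^4*u^2*v^4 + 24*A^4*u^3*v^3 + 12*A^4*u^4*v^2 := by positivity
      have cert2 : (8*A^3*u*v + 14*A^2*u^2*v + 10*A^2*u*v^2 + 6*A*u^3*v + 8*A*u^2*v^2 + 2*A*u*v^3)^2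
          ≤ 4*u^2*v^2*(A*(A+u+v)*(2*A+u)*(2*A+2*u+v)*(2*A+u+v)^2) := by linarith
      nlinarith [mul_le_mul_of_nonneg_left cert2
        (show (0:ℝ) ≤ s^2*(A+u)^2*(A*(A+u+v)*(2*A+u)*(2*A+2*u+v)) by positivity)]
    calc s*(8*A^3*u*v + 14*A^2*u^2*v + 10*A^2*u*v^2 + 6*A*u^3*v + 8*A*u^2*v^2 + 2*A*u*v^3)
        / (2*(A*(A+u)*(A+u+v)*(2*A+u)*(2*A+2*u+v)*(2*A+u+v)))
        = Real.sqrt ((s*(8*A^3*u*v + 14*A^2*u^2*v + 10*A^2*u*v^2 + 6*A*u^3*v + 8*A*u^2*v^2 + 2*A*u*v^3)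
        / (2*(A*(A+u)*(A+u+v)*(2*A+u)*(2*A+2*u+v)*(2*A+u+v))))^2) := (Real.sqrt_sq lhsnn).symm
      _ ≤ Real.sqrt ((2*((s*u*v/(2*(A+u)))/W))^2) := Real.sqrt_le_sqrt hsq
      _ = 2*((s*u*v/(2*(A+u)))/W) := Real.sqrt_sq rhsnn
  have main : s*(u+v)^2/(2*A*(A+u+v)*(2*A+u+v))
      ≤ s*u^2/(2*A*(A+u)*(2*A+u)) + s*v^2/(2*(A+u)*(A+u+v)*(2*A+2*u+v))
        + 2*Real.sqrt ((s*u^2/(2*A*(A+u)*(2*A+u))) * (s*v^2/(2*(A+u)*(A+u+v)*(2*A+2*u+v)))) := by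
    rw [hprod, Real.sqrt_sq (by positivity)]
    linarith
  calc Real.sqrt (s*(u+v)^2/(2*A*(A+u+v)*(2*A+u+v)))
      ≤ Real.sqrt (s*u^2/(2*A*(A+u)*(2*A+u)) + s*v^2/(2*(A+u)*(A+u+v)*(2*A+2*u+v))
        + 2*Real.sqrt ((s*u^2/(2*A*(A+u)*(2*A+u))) * (s*v^2/(2*(A+u)*(A+u+v)*(2*A+2*u+v))))) :=
        Real.sqrt_le_sqrt main
    _ = _ := sqrt_sum_sq' hGab hGbc

lemma Gk_triangle_aux (s a b c : ℝ) (hs : 0 < s) (ha : 0 ≤ a) (hb : 0 ≤ b) (hc : 0 ≤ c)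
    (hac : a ≤ c) :
    Real.sqrt (Gk s a c) ≤ Real.sqrt (Gk s a b) + Real.sqrt (Gk s b c) := by
  rcases le_total b a with hba | hab
  · -- b ≤ a : Gk s a c ≤ Gk s b c
    have hmono : Gk s a c ≤ Gk s b c := by
      unfold Gk
      rw [div_le_div_iff₀ (by positivity) (by positivity)]
      have hp : 0 ≤ a - b := by linarith
      have hq : 0 ≤ c - a := by linarith
      have key : s*(c-b)^2*(2*(a+s)*(c+s)*(a+c+2*s)) - s*(c-a)^2*(2*(b+s)*(c+s)*(b+c+2*s))
          = 2*s*(c+s)*((a-b)^2*(a+s)*(a+c+2*s) + 2*((a-b)*(c-a))*((a+s)*(a+c+2*s))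
            + (a-b)*(c-a)^2*(a+c+2*s) + (a-b)*(c-a)^2*(b+s)) := by ring
      have hpos : (0:ℝ) ≤ 2*s*(c+s)*((a-b)^2*(a+s)*(a+c+2*s) + 2*((a-b)*(c-a))*((a+s)*(a+c+2*s))
            + (a-b)*(c-a)^2*(a+c+2*s) + (a-b)*(c-a)^2*(b+s)) := by positivity
      linarith
    calc Real.sqrt (Gk s a c) ≤ Real.sqrt (Gk s b c) := Real.sqrt_le_sqrt hmono
      _ ≤ _ := le_add_of_nonneg_left (Real.sqrt_nonneg _)
  rcases le_total c b with hcb | hbc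
  · -- c ≤ b : Gk s a c ≤ Gk s a b
    have hp : 0 ≤ c - a := by linarith
    have hq : 0 ≤ b - c := by linarith
    have hA : 0 < a + s := by linarith
    have hmono : Gk s a c ≤ Gk s a b := by
      unfold Gk
      rw [div_le_div_iff₀ (by positivity) (by positivity)]
      have key : s*(b-a)^2*(2*(a+s)*(c+s)*(a+c+2*s)) - s*(c-a)^2*(2*(a+s)*(b+s)*(a+b+2*s))
          = 2*s*(a+s)*(3*(a+s)*(c-a)*(b-c)^2 + 3*(a+s)*(c-a)^2*(b-c)
            + 2*(a+s)^2*(b-c)^2 + 4*(a+s)^2*(c-a)*(b-c)) := by ring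
      have hpos : (0:ℝ) ≤ 2*s*(a+s)*(3*(a+s)*(c-a)*(b-c)^2 + 3*(a+s)*(c-a)^2*(b-c)
            + 2*(a+s)^2*(b-c)^2 + 4*(a+s)^2*(c-a)*(b-c)) := by positivity
      linarith
    calc Real.sqrt (Gk s a c) ≤ Real.sqrt (Gk s a b) := Real.sqrt_le_sqrt hmono
      _ ≤ _ := le_add_of_nonneg_right (Real.sqrt_nonneg _)
  · -- a ≤ b ≤ c : middle case
    have h := mid_core s (a+s) (b-a) (c-b) hs (by linarith) (by linarith) (by linarith)
    have e1 : Gk s a c = s*((b-a)+(c-b))^2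
        /(2*(a+s)*((a+s)+(b-a)+(c-b))*(2*(a+s)+(b-a)+(c-b))) := by
      unfold Gk
      rw [show s*(c-a)^2 = s*((b-a)+(c-b))^2 by ring,
        show 2*(a+s)*(c+s)*(a+c+2*s)
          = 2*(a+s)*((a+s)+(b-a)+(c-b))*(2*(a+s)+(b-a)+(c-b)) by ring]
    have e2 : Gk s a b = s*(b-a)^2/(2*(a+s)*((a+s)+(b-a))*(2*(a+s)+(b-a))) := by
      unfold Gk
      rw [show 2*(a+s)*(b+s)*(a+b+2*s) = 2*(a+s)*((a+s)+(b-a))*(2*(a+s)+(b-a)) by ring]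
    have e3 : Gk s b c = s*(c-b)^2
        /(2*((a+s)+(b-a))*((a+s)+(b-a)+(c-b))*(2*(a+s)+2*(b-a)+(c-b))) := by
      unfold Gk
      rw [show 2*(b+s)*(c+s)*(b+c+2*s)
          = 2*((a+s)+(b-a))*((a+s)+(b-a)+(c-b))*(2*(a+s)+2*(b-a)+(c-b)) by ring]
    rw [e1, e2, e3]
    exact h

lemma Gk_triangle (s a b c : ℝ) (hs : 0 < s) (ha : 0 ≤ a) (hb : 0 ≤ b) (hc : 0 ≤ c) :
    Real.sqrt (Gk s a c) ≤ Real.sqrt (Gk s a b) + Real.sqrt (Gk s b c) := by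
  rcases le_total a c with hac | hca
  · exact Gk_triangle_aux s a b c hs ha hb hc hac
  · rw [Gk_comm s a c, Gk_comm s a b, Gk_comm s b c, add_comm]
    exact Gk_triangle_aux s c b a hs hc hb ha hca


/-- The Jensen-Shannon integrand. -/
noncomputable def jk (a b : ℝ) : ℝ :=
  a/2 * Real.log (a / ((a+b)/2)) + b/2 * Real.log (b / ((a+b)/2))

-- building block : s ↦ α (log (m+s) - log (α+s))
noncomputable def blk (α m t : ℝ) : ℝ := α * (Real.log (m + t) - Real.log (α + t))

lemma blk_zero (m : ℝ) : blk 0 m = fun _ => (0:ℝ) := by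
  funext t; simp [blk]

lemma blk_deriv {α m : ℝ} (hα : 0 ≤ α) (hm : 0 < m) {s : ℝ} (hs : 0 < s) :
    HasDerivAt (blk α m) (α * (1/(m+s) - 1/(α+s))) s := by
  rcases eq_or_lt_of_le hα with h0 | h0
  · subst h0
    rw [blk_zero]
    simpa using hasDerivAt_const s (0:ℝ)
  · have h1 : HasDerivAt (fun t : ℝ => m + t) 1 s := (hasDerivAt_id s).const_add m
    have h2 : HasDerivAt (fun t : ℝ => α + t) 1 s := (hasDerivAt_id s).const_add α
    have l1 := h1.log (by positivity)
    have l2 := h2.log (by positivity)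
    have := ((l1.sub l2).const_mul α)
    simp only [one_div] at this ⊢; exact this

lemma blk_cont {α m : ℝ} (hα : 0 ≤ α) (hm : 0 < m) :
    ContinuousWithinAt (blk α m) (Ici 0) 0 := by
  rcases eq_or_lt_of_le hα with h0 | h0
  · subst h0
    rw [blk_zero]
    exact continuousWithinAt_const
  · apply ContinuousAt.continuousWithinAt
    apply ContinuousAt.mul continuousAt_const
    apply ContinuousAt.sub
    · exact (Real.continuousAt_log (by simp [hm.ne'])).comp
        ((continuous_const.add continuous_id).continuousAt)
    · exact (Real.continuousAt_log (by simp [h0.ne'])).comp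
        ((continuous_const.add continuous_id).continuousAt)

lemma blk_tendsto {α m : ℝ} (hα : 0 ≤ α) (hm : 0 < m) :
    Tendsto (blk α m) atTop (𝓝 0) := by
  rcases eq_or_lt_of_le hα with h0 | h0
  · subst h0
    rw [blk_zero]
    exact tendsto_const_nhds
  · have hratio : Tendsto (fun t : ℝ => (m + t)/(α + t)) atTop (𝓝 1) := by
      have h1 : Tendsto (fun t : ℝ => 1 + (m - α) * (α + t)⁻¹) atTop (𝓝 (1 + (m - α) * 0)) := by
        apply Tendsto.const_add
        apply Tendsto.const_mul
        exact tendsto_inv_atTop_zero.comp (tendsto_atTop_add_const_left _ α tendsto_id)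
      rw [show (1 : ℝ) + (m - α) * 0 = 1 by ring] at h1
      apply h1.congr'
      filter_upwards [eventually_gt_atTop (0:ℝ)] with t ht
      have : α + t ≠ 0 := by positivity
      field_simp
      ring
    have hlog : Tendsto (fun t : ℝ => Real.log ((m + t)/(α + t))) atTop (𝓝 0) := by
      have := (Real.continuousAt_log (by norm_num : (1:ℝ) ≠ 0)).tendsto.comp hratio
      simpa [Function.comp_def] using this
    have : Tendsto (fun t : ℝ => α * Real.log ((m + t)/(α + t))) atTop (𝓝 (α * 0)) :=
      hlog.const_mul α
    rw [mul_zero] at this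
    apply this.congr'
    filter_upwards [eventually_gt_atTop (0:ℝ)] with t ht
    rw [blk, Real.log_div (by positivity) (by positivity)]

lemma jk_repr {a b : ℝ} (ha : 0 ≤ a) (hb : 0 ≤ b) :
    IntegrableOn (fun s => Gk s a b) (Ioi 0) ∧ (∫ s in Ioi 0, Gk s a b) = jk a b := by
  rcases eq_or_lt_of_le (by positivity : (0:ℝ) ≤ (a+b)/2) with hm | hm
  · -- a = b = 0
    have ha0 : a = 0 := by linarith [abs_nonneg a]
    have hb0 : b = 0 := by linarith
    subst ha0; subst hb0
    constructor
    · apply (integrableOn_congr_fun (g := fun _ => (0:ℝ)) ?_ measurableSet_Ioi).mpr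
        ((integrableOn_const_iff).mpr (Or.inl (by norm_num)))
      intro s hs
      simp [Gk]
    · rw [setIntegral_congr_fun measurableSet_Ioi (g := fun _ => (0:ℝ)) ?_]
      · simp [jk]
      · intro s hs; simp [Gk]
  · -- m > 0
    set m := (a+b)/2 with hmdef
    set F := fun t => blk a m t + blk b m t with hF
    have hcont : ContinuousWithinAt F (Ici 0) 0 := (blk_cont ha hm).add (blk_cont hb hm)
    have hderiv : ∀ s ∈ Ioi 0, HasDerivAt F (2 * Gk s a b) s := by
      intro s hs
      rw [mem_Ioi] at hs
      have h := (blk_deriv ha hm hs).add (blk_deriv hb hm hs)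
      convert h using 1
      rfl; rfl; rfl
      have h1 : a + s > 0 := by linarith
      have h2 : b + s > 0 := by linarith
      have h3 : m + s > 0 := by linarith
      rw [Gk, hmdef]
      field_simp
      ring
    have hpos : ∀ s ∈ Ioi 0, 0 ≤ 2 * Gk s a b := by
      intro s hs
      rw [mem_Ioi] at hs
      rw [Gk]
      positivity
    have htend : Tendsto F atTop (𝓝 0) := by
      have := (blk_tendsto ha hm).add (blk_tendsto hb hm)
      simpa using this
    have hint2 : IntegrableOn (fun s => 2 * Gk s a b) (Ioi 0) :=
      integrableOn_Ioi_deriv_of_nonneg hcont hderiv hpos htend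
    have hval2 : (∫ s in Ioi 0, 2 * Gk s a b) = 0 - F 0 :=
      integral_Ioi_of_hasDerivAt_of_nonneg hcont hderiv hpos htend
    have hint : IntegrableOn (fun s => Gk s a b) (Ioi 0) := by
      have h2 := hint2.div_const 2
      exact h2.congr (ae_of_all _ (fun s => by ring))
    refine ⟨hint, ?_⟩
    have hval : (∫ s in Ioi 0, Gk s a b) = (0 - F 0)/2 := by
      rw [← hval2, integral_const_mul]; ring
    have hF0 : F 0 = a * (Real.log m - Real.log a) + b * (Real.log m - Real.log b) := by
      simp [hF, blk]
    have hjk : jk a b = a/2 * Real.log (a/m) + b/2 * Real.log (b/m) := by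
      rw [jk, hmdef]
    rw [hval, hF0, hjk]
    rcases eq_or_lt_of_le ha with ha0 | ha0 <;> rcases eq_or_lt_of_le hb with hb0 | hb0
    · exfalso; rw [hmdef] at hm; rw [← ha0, ← hb0] at hm; norm_num at hm
    · rw [← ha0, Real.log_div hb0.ne' hm.ne']
      simp [Real.log_zero]
      ring
    · rw [← hb0, Real.log_div ha0.ne' hm.ne']
      simp [Real.log_zero]
      ring
    · rw [Real.log_div ha0.ne' hm.ne', Real.log_div hb0.ne' hm.ne']
      ring


lemma mul_log_div_bound {p q : ℝ} (hp : 0 ≤ p) (hq : 0 ≤ q) :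
    |p * Real.log (p/((p+q)/2))| ≤ p + q := by
  rcases eq_or_lt_of_le hp with hp0 | hp0
  · simp [← hp0, hq]
  · have hm : 0 < (p+q)/2 := by linarith
    set m := (p+q)/2 with hmdef
    have hr : 0 < p/m := by positivity
    rcases le_or_gt 1 (p/m) with h1 | h1
    · have hlogge : 0 ≤ Real.log (p/m) := Real.log_nonneg h1
      have hle : Real.log (p/m) ≤ p/m - 1 := Real.log_le_sub_one_of_pos hr
      have hr2 : p/m ≤ 2 := by
        rw [div_le_iff₀ hm]; rw [hmdef]; linarith
      rw [abs_of_nonneg (by positivity)]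
      calc p * Real.log (p/m) ≤ p * (p/m - 1) := by
            apply mul_le_mul_of_nonneg_left hle hp
        _ ≤ p * 1 := by apply mul_le_mul_of_nonneg_left (by linarith) hp
        _ ≤ p + q := by linarith
    · have hlog : Real.log (p/m) < 0 := Real.log_neg hr h1
      have hinv : Real.log ((p/m)⁻¹) ≤ (p/m)⁻¹ - 1 :=
        Real.log_le_sub_one_of_pos (by positivity)
      rw [Real.log_inv] at hinv
      have hinv2 : (p/m)⁻¹ = m/p := by rw [inv_div]
      rw [hinv2] at hinv
      -- -log(p/m) ≤ m/p - 1, so |p log(p/m)| = -p log(p/m) ≤ p*(m/p-1) = m - p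
      rw [abs_of_nonpos (by nlinarith)]
      have : -(p * Real.log (p/m)) = p * (-Real.log (p/m)) := by ring
      rw [this]
      calc p * (-Real.log (p/m)) ≤ p * (m/p - 1) := by
            apply mul_le_mul_of_nonneg_left (by linarith) hp
        _ = m - p := by field_simp
        _ ≤ p + q := by rw [hmdef]; linarith

lemma jk_abs_bound {a b : ℝ} (ha : 0 ≤ a) (hb : 0 ≤ b) : |jk a b| ≤ a + b := by
  have h1 := mul_log_div_bound ha hb
  have h2 := mul_log_div_bound hb ha
  rw [add_comm b a] at h2
  rw [jk]
  have e1 : a/2 * Real.log (a/((a+b)/2)) = (a * Real.log (a/((a+b)/2)))/2 := by ring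
  have e2 : b/2 * Real.log (b/((a+b)/2)) = (b * Real.log (b/((a+b)/2)))/2 := by ring
  rw [e1, e2]
  calc |(a * Real.log (a/((a+b)/2)))/2 + (b * Real.log (b/((a+b)/2)))/2|
      ≤ |(a * Real.log (a/((a+b)/2)))/2| + |(b * Real.log (b/((a+b)/2)))/2| := abs_add_le _ _
    _ = |a * Real.log (a/((a+b)/2))|/2 + |b * Real.log (b/((a+b)/2))|/2 := by
        rw [abs_div, abs_div]; norm_num
    _ ≤ (a+b)/2 + (a+b)/2 := add_le_add (by linarith) (by linarith)
    _ = a + b := by ring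

lemma jk_nonneg {a b : ℝ} (ha : 0 ≤ a) (hb : 0 ≤ b) : 0 ≤ jk a b := by
  rcases eq_or_lt_of_le (by positivity : (0:ℝ) ≤ (a+b)/2) with hm | hm
  · have ha0 : a = 0 := by linarith
    have hb0 : b = 0 := by linarith
    simp [jk, ha0, hb0]
  · set m := (a+b)/2 with hmdef
    have key : ∀ x : ℝ, 0 ≤ x → x - m ≤ x * Real.log (x/m) := by
      intro x hx
      rcases eq_or_lt_of_le hx with hx0 | hx0
      · simp [← hx0]; linarith
      · have h1 : Real.log (m/x) ≤ m/x - 1 := Real.log_le_sub_one_of_pos (by positivity)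
        have h2 : Real.log (m/x) = -Real.log (x/m) := by
          rw [← Real.log_inv, inv_div]
        rw [h2] at h1
        have h3 : -(m/x) + 1 ≤ Real.log (x/m) := by linarith
        calc x - m = x * (-(m/x) + 1) := by field_simp; ring
          _ ≤ x * Real.log (x/m) := mul_le_mul_of_nonneg_left h3 hx
    have k1 := key a ha
    have k2 := key b hb
    have : (a - m) + (b - m) = 0 := by rw [hmdef]; ring
    rw [jk, ← hmdef]
    nlinarith [k1, k2]

section KL
variable {Ω : Type*} [MeasurableSpace Ω]

lemma prob_M (P Q : Measure Ω) [IsProbabilityMeasure P] [IsProbabilityMeasure Q] :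
    IsProbabilityMeasure ((2:ℝ≥0∞)⁻¹ • (P + Q)) := by
  constructor
  simp [Measure.smul_apply]
  exact ENNReal.inv_two_add_inv_two

lemma kl_aux (P Q : Measure Ω) [IsProbabilityMeasure P] [IsProbabilityMeasure Q]
    (μ : Measure Ω) [IsFiniteMeasure μ] (hPμ : P ≪ μ) (hQμ : Q ≪ μ) :
    klDiv P ((2:ℝ≥0∞)⁻¹ • (P + Q))
      = ((∫ x, (P.rnDeriv μ x).toReal *
          Real.log ((P.rnDeriv μ x).toReal
            / (((P.rnDeriv μ x).toReal + (Q.rnDeriv μ x).toReal)/2)) ∂μ : ℝ) : EReal)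
    ∧ Integrable (fun x => (P.rnDeriv μ x).toReal *
          Real.log ((P.rnDeriv μ x).toReal
            / (((P.rnDeriv μ x).toReal + (Q.rnDeriv μ x).toReal)/2))) μ := by
  set M := (2:ℝ≥0∞)⁻¹ • (P + Q) with hMdef
  haveI : IsProbabilityMeasure M := prob_M P Q
  have hPM : P ≪ M := by
    have h1 : P ≪ P + Q := Measure.absolutelyContinuous_of_le (Measure.le_add_right le_rfl)
    exact h1.trans (Measure.absolutelyContinuous_smul (by norm_num))
  have hPQμ : P + Q ≪ μ := by
    intro s hs
    simp only [Measure.coe_add, Pi.add_apply, hPμ hs, hQμ hs, add_zero]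
  have hMμ : M ≪ μ := Measure.smul_absolutelyContinuous.trans hPQμ
  -- density of M
  have hMrn : M.rnDeriv μ =ᵐ[μ] fun x => 2⁻¹ * (P.rnDeriv μ x + Q.rnDeriv μ x) := by
    have h1 := Measure.rnDeriv_smul_left_of_ne_top (P + Q) μ
      (show (2:ℝ≥0∞)⁻¹ ≠ ⊤ by norm_num)
    have h2 := Measure.rnDeriv_add P Q μ
    filter_upwards [h1, h2] with x hx1 hx2
    rw [hMdef] at *
    simp only [Pi.smul_apply, smul_eq_mul] at hx1
    rw [hx1, hx2]
    simp [Pi.add_apply]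
  have hchain := Measure.rnDeriv_mul_rnDeriv hPM (κ := μ)
  have hfinP := Measure.rnDeriv_lt_top P μ
  have hfinQ := Measure.rnDeriv_lt_top Q μ
  -- the a.e. identity for the weighted log-likelihood ratio
  have hllr_eq : (fun x => (P.rnDeriv μ x).toReal * llr P M x) =ᵐ[μ]
      (fun x => (P.rnDeriv μ x).toReal *
        Real.log ((P.rnDeriv μ x).toReal
          / (((P.rnDeriv μ x).toReal + (Q.rnDeriv μ x).toReal)/2))) := by
    filter_upwards [hchain, hMrn, hfinP, hfinQ] with x hx hmx hp hq
    by_cases hp0 : P.rnDeriv μ x = 0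
    · simp [hp0]
    · have hdval : M.rnDeriv μ x = 2⁻¹ * (P.rnDeriv μ x + Q.rnDeriv μ x) := hmx
      have hd0 : M.rnDeriv μ x ≠ 0 := by
        rw [hdval]
        simp only [ne_eq, mul_eq_zero, not_or]
        constructor
        · norm_num
        · simp only [add_eq_zero, not_and_or]
          exact Or.inl hp0
      have hdfin : M.rnDeriv μ x ≠ ⊤ := by
        rw [hdval]
        exact ENNReal.mul_ne_top (by norm_num) (ENNReal.add_ne_top.mpr ⟨hp.ne, hq.ne⟩)
      have hrfin : P.rnDeriv M x ≠ ⊤ := by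
        intro hcon
        rw [Pi.mul_apply, hcon] at hx
        rw [ENNReal.top_mul hd0] at hx
        exact hp.ne hx.symm
      have htoReal : (P.rnDeriv M x).toReal * (M.rnDeriv μ x).toReal
          = (P.rnDeriv μ x).toReal := by
        rw [← ENNReal.toReal_mul]
        exact congrArg ENNReal.toReal hx
      have hdR0 : (M.rnDeriv μ x).toReal ≠ 0 := ENNReal.toReal_ne_zero.mpr ⟨hd0, hdfin⟩
      have hrR : (P.rnDeriv M x).toReal
          = (P.rnDeriv μ x).toReal / (M.rnDeriv μ x).toReal := by
        field_simp [← htoReal]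
        exact htoReal
      have hdR : (M.rnDeriv μ x).toReal
          = ((P.rnDeriv μ x).toReal + (Q.rnDeriv μ x).toReal)/2 := by
        rw [hdval, ENNReal.toReal_mul, ENNReal.toReal_add hp.ne hq.ne]
        simp only [ENNReal.toReal_inv]
        norm_num
        ring
      rw [llr_def]
      simp only
      rw [hrR, hdR]
  -- integrability over μ
  have hmeas : Measurable (fun x => (P.rnDeriv μ x).toReal *
        Real.log ((P.rnDeriv μ x).toReal
          / (((P.rnDeriv μ x).toReal + (Q.rnDeriv μ x).toReal)/2))) := by
    have h1 : Measurable (fun x => (P.rnDeriv μ x).toReal) :=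
      (Measure.measurable_rnDeriv P μ).ennreal_toReal
    have h2 : Measurable (fun x => (Q.rnDeriv μ x).toReal) :=
      (Measure.measurable_rnDeriv Q μ).ennreal_toReal
    exact h1.mul (Real.measurable_log.comp (h1.div ((h1.add h2).div_const 2)))
  have hbound : ∀ x, ‖(P.rnDeriv μ x).toReal *
        Real.log ((P.rnDeriv μ x).toReal
          / (((P.rnDeriv μ x).toReal + (Q.rnDeriv μ x).toReal)/2))‖
      ≤ (P.rnDeriv μ x).toReal + (Q.rnDeriv μ x).toReal := by
    intro x
    rw [Real.norm_eq_abs]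
    exact mul_log_div_bound ENNReal.toReal_nonneg ENNReal.toReal_nonneg
  have hInt : Integrable (fun x => (P.rnDeriv μ x).toReal *
        Real.log ((P.rnDeriv μ x).toReal
          / (((P.rnDeriv μ x).toReal + (Q.rnDeriv μ x).toReal)/2))) μ := by
    apply Integrable.mono' ((Measure.integrable_toReal_rnDeriv (μ := P) (ν := μ)).add (Measure.integrable_toReal_rnDeriv (μ := Q) (ν := μ)))
      hmeas.aestronglyMeasurable
    exact ae_of_all _ hbound
  -- integrability of llr wrt P
  have hIntllr : Integrable (llr P M) P := by
    rw [← integrable_rnDeriv_smul_iff hPμ]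
    apply hInt.congr
    filter_upwards [hllr_eq] with x hx
    rw [smul_eq_mul]
    exact hx.symm
  refine ⟨?_, hInt⟩
  rw [klDiv, if_pos ⟨hPM, hIntllr⟩]
  congr 1
  rw [← integral_rnDeriv_smul hPμ]
  apply integral_congr_ae
  filter_upwards [hllr_eq] with x hx
  rw [smul_eq_mul, hx]

end KL


section Final
variable {Ω : Type*} [MeasurableSpace Ω]

lemma jk_triangle {a b c : ℝ} (ha : 0 ≤ a) (hb : 0 ≤ b) (hc : 0 ≤ c) :
    Real.sqrt (jk a c) ≤ Real.sqrt (jk a b) + Real.sqrt (jk b c) := by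
  obtain ⟨iac, eac⟩ := jk_repr ha hc
  obtain ⟨iab, eab⟩ := jk_repr ha hb
  obtain ⟨ibc, ebc⟩ := jk_repr hb hc
  rw [← eac, ← eab, ← ebc]
  refine sqrt_integral_triangle iac iab ibc ?_ ?_ ?_
  · rw [Filter.EventuallyLE, ae_restrict_iff' measurableSet_Ioi]
    exact ae_of_all _ fun s hs => by simpa using Gk_nonneg hs ha hb
  · rw [Filter.EventuallyLE, ae_restrict_iff' measurableSet_Ioi]
    exact ae_of_all _ fun s hs => by simpa using Gk_nonneg hs hb hc
  · rw [ae_restrict_iff' measurableSet_Ioi]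
    exact ae_of_all _ fun s hs => Gk_triangle s a b c hs ha hb hc

lemma jsDiv_toReal (P Q : Measure Ω) [IsProbabilityMeasure P] [IsProbabilityMeasure Q]
    (μ : Measure Ω) [IsFiniteMeasure μ] (hPμ : P ≪ μ) (hQμ : Q ≪ μ) :
    (jsDiv P Q).toReal = ∫ x, jk ((P.rnDeriv μ x).toReal) ((Q.rnDeriv μ x).toReal) ∂μ := by
  obtain ⟨hP, hIntP⟩ := kl_aux P Q μ hPμ hQμ
  obtain ⟨hQ, hIntQ⟩ := kl_aux Q P μ hQμ hPμ
  rw [show Q + P = P + Q from add_comm Q P] at hQ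
  rw [jsDiv, hP, hQ]
  have hhalf : (1/2 : EReal) = ((1/2:ℝ) : EReal) := by
    rw [EReal.coe_div]
    norm_num
    rfl
  rw [hhalf, ← EReal.coe_mul, ← EReal.coe_mul, ← EReal.coe_add, EReal.toReal_coe]
  rw [← integral_const_mul, ← integral_const_mul,
    ← integral_add (hIntP.const_mul _) (hIntQ.const_mul _)]
  apply integral_congr_ae
  apply ae_of_all
  intro x
  simp only [jk]
  rw [show ((Q.rnDeriv μ x).toReal + (P.rnDeriv μ x).toReal)
      = ((P.rnDeriv μ x).toReal + (Q.rnDeriv μ x).toReal) from add_comm _ _]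
  ring

lemma jk_integrable (A B : Measure Ω) [IsFiniteMeasure A] [IsFiniteMeasure B]
    (μ : Measure Ω) [IsFiniteMeasure μ] :
    Integrable (fun x => jk ((A.rnDeriv μ x).toReal) ((B.rnDeriv μ x).toReal)) μ := by
  have h1 : Measurable (fun x => (A.rnDeriv μ x).toReal) :=
    (Measure.measurable_rnDeriv A μ).ennreal_toReal
  have h2 : Measurable (fun x => (B.rnDeriv μ x).toReal) :=
    (Measure.measurable_rnDeriv B μ).ennreal_toReal
  have hmeas : Measurable (fun x => jk ((A.rnDeriv μ x).toReal) ((B.rnDeriv μ x).toReal)) := by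
    simp only [jk]
    exact ((h1.div_const 2).mul (Real.measurable_log.comp
        (h1.div ((h1.add h2).div_const 2)))).add
      ((h2.div_const 2).mul (Real.measurable_log.comp
        (h2.div ((h1.add h2).div_const 2))))
  apply Integrable.mono' ((Measure.integrable_toReal_rnDeriv (μ := A) (ν := μ)).add
    (Measure.integrable_toReal_rnDeriv (μ := B) (ν := μ))) hmeas.aestronglyMeasurable
  exact ae_of_all _ fun x => by
    rw [Real.norm_eq_abs]
    exact jk_abs_bound ENNReal.toReal_nonneg ENNReal.toReal_nonneg

end Final

theorem sqrt_jsDiv_triangle {Ω : Type*} [MeasurableSpace Ω]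
    (P Q R : Measure Ω) [IsProbabilityMeasure P] [IsProbabilityMeasure Q]
    [IsProbabilityMeasure R] :
    Real.sqrt (jsDiv P R).toReal
      ≤ Real.sqrt (jsDiv P Q).toReal + Real.sqrt (jsDiv Q R).toReal := by
  have hPμ : P ≪ P + Q + R := Measure.absolutelyContinuous_of_le (by
    calc P ≤ P + Q := Measure.le_add_right le_rfl
      _ ≤ P + Q + R := Measure.le_add_right le_rfl)
  have hQμ : Q ≪ P + Q + R := Measure.absolutelyContinuous_of_le (by
    calc Q ≤ P + Q := Measure.le_add_left le_rfl
      _ ≤ P + Q + R := Measure.le_add_right le_rfl)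
  have hRμ : R ≪ P + Q + R := Measure.absolutelyContinuous_of_le (Measure.le_add_left le_rfl)
  rw [jsDiv_toReal P R (P+Q+R) hPμ hRμ, jsDiv_toReal P Q (P+Q+R) hPμ hQμ,
    jsDiv_toReal Q R (P+Q+R) hQμ hRμ]
  refine sqrt_integral_triangle (jk_integrable P R _) (jk_integrable P Q _)
    (jk_integrable Q R _) ?_ ?_ ?_
  · exact ae_of_all _ fun x => by
      simpa using jk_nonneg ENNReal.toReal_nonneg ENNReal.toReal_nonneg
  · exact ae_of_all _ fun x => by
      simpa using jk_nonneg ENNReal.toReal_nonneg ENNReal.toReal_nonneg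
  · exact ae_of_all _ fun x =>
      jk_triangle ENNReal.toReal_nonneg ENNReal.toReal_nonneg ENNReal.toReal_nonneg
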